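/- Let H be a Hermitian n×n complex matrix, J_1,…,J_M n×n complex matrices, λ_1,…,λ_M positive reals, and let S ⊆ ℂⁿ be a nonzero subspace with the property that for every unit vector ψ₀ ∈ S and every t ≥ 0, the time-evolved state ρ(t) = exp(t𝓛)(ψ₀ψ₀ᴴ) satisfies L_D[ρ(t)] = 0 and ρ(t) = φφᴴ for some unit vector φ ∈ S. Then: (i) H maps S into S; (ii) there exist complex numbers c_1,…,c_M such that J_l ψ = c_l ψ for every ψ ∈ S and every l; and (iii) Γ ψ = g ψ for every ψ ∈ S, where g = Σ_{l=1}^M λ_l |c_l|². In particular the eigenvalues c_l and g are common to all vectors of S. -/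

import Mathlib

open Matrix BigOperators

attribute [local instance] Matrix.linftyOpNormedAddCommGroup Matrix.linftyOpNormedRing
  Matrix.linftyOpNormedAlgebra

/-- The decoherence superoperator `L_D[ρ] = Σ_l λ_l (J_l ρ J_lᴴ − ½ J_lᴴ J_l ρ − ½ ρ J_lᴴ J_l)`. -/
noncomputable def LD {M n : ℕ} (J : Fin M → Matrix (Fin n) (Fin n) ℂ)
    (lam : Fin M → ℝ) (ρ : Matrix (Fin n) (Fin n) ℂ) : Matrix (Fin n) (Fin n) ℂ :=
  ∑ l, (lam l : ℂ) • (J l * ρ * (J l)ᴴ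
    - (1 / 2 : ℂ) • ((J l)ᴴ * J l * ρ) - (1 / 2 : ℂ) • (ρ * ((J l)ᴴ * J l)))

/-- The decoherence operator `Γ = Σ_l λ_l J_lᴴ J_l`. -/
noncomputable def Gam {M n : ℕ} (J : Fin M → Matrix (Fin n) (Fin n) ℂ)
    (lam : Fin M → ℝ) : Matrix (Fin n) (Fin n) ℂ :=
  ∑ l, (lam l : ℂ) • ((J l)ᴴ * J l)

/-- The Liouvillian `𝓛[ρ] = −i[H,ρ] + L_D[ρ]` as a continuous linear endomorphism of the
space of `n×n` complex matrices (equipped with the `L∞`-operator norm). -/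
noncomputable def Liou {M n : ℕ} (H : Matrix (Fin n) (Fin n) ℂ)
    (J : Fin M → Matrix (Fin n) (Fin n) ℂ) (lam : Fin M → ℝ) :
    Matrix (Fin n) (Fin n) ℂ →L[ℂ] Matrix (Fin n) (Fin n) ℂ :=
  LinearMap.toContinuousLinearMap
    ((-Complex.I) • (LinearMap.mulLeft ℂ H - LinearMap.mulRight ℂ H)
      + ∑ l, (lam l : ℂ) •
          ((LinearMap.mulRight ℂ (J l)ᴴ).comp (LinearMap.mulLeft ℂ (J l))
            - (1 / 2 : ℂ) • LinearMap.mulLeft ℂ ((J l)ᴴ * J l)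
            - (1 / 2 : ℂ) • LinearMap.mulRight ℂ ((J l)ᴴ * J l)))

/-- The Liouvillian indeed sends `ρ` to `−i[H,ρ] + L_D[ρ]`. -/
theorem Liou_apply {M n : ℕ} (H : Matrix (Fin n) (Fin n) ℂ)
    (J : Fin M → Matrix (Fin n) (Fin n) ℂ) (lam : Fin M → ℝ)
    (ρ : Matrix (Fin n) (Fin n) ℂ) :
    Liou H J lam ρ = (-Complex.I) • (H * ρ - ρ * H) + LD J lam ρ := by
  simp [Liou, LD, LinearMap.mulLeft, LinearMap.mulRight]

/-- `exp(t𝓛)`, the exponential of the Liouvillian as a linear map. -/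
noncomputable def expL {M n : ℕ} (H : Matrix (Fin n) (Fin n) ℂ)
    (J : Fin M → Matrix (Fin n) (Fin n) ℂ) (lam : Fin M → ℝ) (t : ℝ) :
    Matrix (Fin n) (Fin n) ℂ →L[ℂ] Matrix (Fin n) (Fin n) ℂ :=
  haveI : IsTopologicalRing (Matrix (Fin n) (Fin n) ℂ →L[ℂ] Matrix (Fin n) (Fin n) ℂ) :=
    @NonUnitalSeminormedRing.toIsTopologicalRing _
      (@ContinuousLinearMap.toNormedRing ℂ (Matrix (Fin n) (Fin n) ℂ) _ _ _).toNonUnitalNormedRing.toNonUnitalSeminormedRing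
  NormedSpace.exp ((t : ℂ) • Liou H J lam)

/-- The matrix exponential `exp(−itH)`. -/
noncomputable def expM {n : ℕ} (H : Matrix (Fin n) (Fin n) ℂ) (t : ℝ) :
    Matrix (Fin n) (Fin n) ℂ :=
  NormedSpace.exp ((-(Complex.I * (t : ℂ))) • H)
namespace Stmt8Aux

noncomputable instance instCLMNormedRing {n : ℕ} :
    NormedRing (Matrix (Fin n) (Fin n) ℂ →L[ℂ] Matrix (Fin n) (Fin n) ℂ) :=
  ContinuousLinearMap.toNormedRing

noncomputable instance instCLMNormedAlgebra {n : ℕ} :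
    NormedAlgebra ℂ (Matrix (Fin n) (Fin n) ℂ →L[ℂ] Matrix (Fin n) (Fin n) ℂ) :=
  ContinuousLinearMap.toNormedAlgebra

noncomputable instance instCLMComplete {n : ℕ} :
    @CompleteSpace (Matrix (Fin n) (Fin n) ℂ →L[ℂ] Matrix (Fin n) (Fin n) ℂ)
      (@PseudoMetricSpace.toUniformSpace _ (@SeminormedRing.toPseudoMetricSpace _
        (@NormedRing.toSeminormedRing _ instCLMNormedRing))) := by
  have h := FiniteDimensional.complete ℂ (Matrix (Fin n) (Fin n) ℂ →L[ℂ] Matrix (Fin n) (Fin n) ℂ)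
  exact h

noncomputable instance instCLMTopRing {n : ℕ} :
    IsTopologicalRing (Matrix (Fin n) (Fin n) ℂ →L[ℂ] Matrix (Fin n) (Fin n) ℂ) :=
  @NonUnitalSeminormedRing.toIsTopologicalRing _
    (@ContinuousLinearMap.toNormedRing ℂ (Matrix (Fin n) (Fin n) ℂ) _ _ _).toNonUnitalNormedRing.toNonUnitalSeminormedRing

lemma myVecMulVec_mulVec {n : ℕ} (a b x : Fin n → ℂ) :
    (vecMulVec a b).mulVec x = (b ⬝ᵥ x) • a := by
  ext i
  simp only [Matrix.mulVec, vecMulVec_apply, dotProduct, Pi.smul_apply, smul_eq_mul,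
    Finset.sum_mul]
  exact Finset.sum_congr rfl (fun j _ => by ring)

lemma mySum_mulVec {n m : ℕ} (A : Fin m → Matrix (Fin n) (Fin n) ℂ) (v : Fin n → ℂ) :
    (∑ l, A l).mulVec v = ∑ l, (A l).mulVec v := by
  ext i
  simp [Matrix.mulVec, dotProduct, Matrix.sum_apply, Finset.sum_mul]
  rw [Finset.sum_comm]

lemma myDot_sum {n m : ℕ} (v : Fin n → ℂ) (w : Fin m → Fin n → ℂ) :
    v ⬝ᵥ (∑ l, w l) = ∑ l, v ⬝ᵥ w l := by
  simp [dotProduct, Finset.mul_sum]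
  rw [Finset.sum_comm]

lemma dot_conjTranspose {n : ℕ} (A : Matrix (Fin n) (Fin n) ℂ) (ψ φ : Fin n → ℂ) :
    star ψ ⬝ᵥ Aᴴ.mulVec φ = star (A.mulVec ψ) ⬝ᵥ φ := by
  rw [dotProduct_mulVec, ← star_mulVec]

lemma dot_self_eq {n : ℕ} (v : Fin n → ℂ) :
    star v ⬝ᵥ v = ((∑ i, Complex.normSq (v i) : ℝ) : ℂ) := by
  rw [Complex.ofReal_sum]
  refine Finset.sum_congr rfl (fun i _ => ?_)
  simp [← Complex.mul_conj, mul_comm]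

lemma LD_term_dot {n : ℕ} (A : Matrix (Fin n) (Fin n) ℂ) (ψ : Fin n → ℂ)
    (hψ : star ψ ⬝ᵥ ψ = 1) :
    star ψ ⬝ᵥ (A * vecMulVec ψ (star ψ) * Aᴴ
      - (1/2:ℂ) • (Aᴴ * A * vecMulVec ψ (star ψ))
      - (1/2:ℂ) • (vecMulVec ψ (star ψ) * (Aᴴ * A))).mulVec ψ
    = star (star ψ ⬝ᵥ A.mulVec ψ) * (star ψ ⬝ᵥ A.mulVec ψ)
      - star (A.mulVec ψ) ⬝ᵥ A.mulVec ψ := by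
  set a := A.mulVec ψ with ha
  have hsa : star a ⬝ᵥ ψ = star (star ψ ⬝ᵥ a) := star_dotProduct a ψ
  have e1 : (A * vecMulVec ψ (star ψ) * Aᴴ).mulVec ψ
      = (star a ⬝ᵥ ψ) • a := by
    rw [← Matrix.mulVec_mulVec, ← Matrix.mulVec_mulVec, myVecMulVec_mulVec,
      dot_conjTranspose, Matrix.mulVec_smul]
  have e2 : (Aᴴ * A * vecMulVec ψ (star ψ)).mulVec ψ = (Aᴴ * A).mulVec ψ := by
    rw [← Matrix.mulVec_mulVec, myVecMulVec_mulVec, hψ, one_smul]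
  have e3 : (vecMulVec ψ (star ψ) * (Aᴴ * A)).mulVec ψ
      = (star ψ ⬝ᵥ (Aᴴ * A).mulVec ψ) • ψ := by
    rw [← Matrix.mulVec_mulVec, myVecMulVec_mulVec]
  have e4 : star ψ ⬝ᵥ (Aᴴ * A).mulVec ψ = star a ⬝ᵥ a := by
    rw [← Matrix.mulVec_mulVec, dot_conjTranspose]
  rw [Matrix.sub_mulVec, Matrix.sub_mulVec, Matrix.smul_mulVec,
    Matrix.smul_mulVec, e1, e2, e3, e4, dotProduct_sub, dotProduct_sub,
    dotProduct_smul, dotProduct_smul, dotProduct_smul, dotProduct_smul, e4, hψ, hsa]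
  simp only [smul_eq_mul]
  ring

lemma eigen_of_LD_zero {M n : ℕ} (J : Fin M → Matrix (Fin n) (Fin n) ℂ)
    (lam : Fin M → ℝ) (hlam : ∀ l, 0 < lam l) (ψ : Fin n → ℂ)
    (hψ : star ψ ⬝ᵥ ψ = 1)
    (h0 : LD J lam (vecMulVec ψ (star ψ)) = 0) :
    ∀ l, (J l).mulVec ψ = (star ψ ⬝ᵥ (J l).mulVec ψ) • ψ := by
  set u : Fin M → Fin n → ℂ :=
    fun l => (J l).mulVec ψ - (star ψ ⬝ᵥ (J l).mulVec ψ) • ψ with hu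
  have hdot : star ψ ⬝ᵥ (LD J lam (vecMulVec ψ (star ψ))).mulVec ψ = 0 := by
    rw [h0]; simp
  have hexp : star ψ ⬝ᵥ (LD J lam (vecMulVec ψ (star ψ))).mulVec ψ
      = ∑ l, (lam l : ℂ) * (star (star ψ ⬝ᵥ (J l).mulVec ψ) * (star ψ ⬝ᵥ (J l).mulVec ψ)
          - star ((J l).mulVec ψ) ⬝ᵥ (J l).mulVec ψ) := by
    rw [LD, mySum_mulVec, myDot_sum]
    refine Finset.sum_congr rfl (fun l _ => ?_)
    rw [Matrix.smul_mulVec, dotProduct_smul, LD_term_dot _ _ hψ, smul_eq_mul]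
  have huu : ∀ l, star (u l) ⬝ᵥ u l
      = star ((J l).mulVec ψ) ⬝ᵥ (J l).mulVec ψ
        - star (star ψ ⬝ᵥ (J l).mulVec ψ) * (star ψ ⬝ᵥ (J l).mulVec ψ) := by
    intro l
    set a := (J l).mulVec ψ with ha
    set c := star ψ ⬝ᵥ a with hc
    have hsa : star a ⬝ᵥ ψ = star c := star_dotProduct a ψ
    have : star (u l) = star a - star c • star ψ := by
      rw [hu]; simp [star_sub, star_smul]; rfl
    show star (u l) ⬝ᵥ (a - c • ψ) = star a ⬝ᵥ a - star c * c
    rw [this]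
    rw [sub_dotProduct, dotProduct_sub, dotProduct_sub, smul_dotProduct,
      smul_dotProduct, dotProduct_smul, dotProduct_smul, hψ, hsa, ← hc]
    simp only [smul_eq_mul]
    ring
  have hsum : ∑ l, (lam l : ℂ) * (star (u l) ⬝ᵥ u l) = 0 := by
    rw [← neg_eq_zero, ← Finset.sum_neg_distrib]
    rw [hexp] at hdot
    rw [← hdot]
    refine Finset.sum_congr rfl (fun l _ => ?_)
    rw [huu l]; ring
  have hreal : ∑ l, lam l * (∑ i, Complex.normSq (u l i)) = 0 := by
    have : ((∑ l, lam l * (∑ i, Complex.normSq (u l i)) : ℝ) : ℂ) = 0 := by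
      rw [← hsum]
      push_cast
      exact Finset.sum_congr rfl (fun l _ => by rw [dot_self_eq]; push_cast; ring)
    exact_mod_cast this
  have hzero : ∀ l, ∀ i, u l i = 0 := by
    intro l
    have h1 : ∀ l ∈ Finset.univ, (0:ℝ) ≤ lam l * (∑ i, Complex.normSq (u l i)) := by
      intro l _
      exact mul_nonneg (hlam l).le (Finset.sum_nonneg fun i _ => Complex.normSq_nonneg _)
    have h2 := (Finset.sum_eq_zero_iff_of_nonneg h1).1 hreal l (Finset.mem_univ l)
    have h3 : ∑ i, Complex.normSq (u l i) = 0 := by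
      rcases mul_eq_zero.1 h2 with h | h
      · exact absurd h (hlam l).ne'
      · exact h
    intro i
    have h4 := (Finset.sum_eq_zero_iff_of_nonneg
      (fun i _ => Complex.normSq_nonneg (u l i))).1 h3 i (Finset.mem_univ i)
    exact Complex.normSq_eq_zero.1 h4
  intro l
  have : u l = 0 := funext (hzero l)
  have h5 : (J l).mulVec ψ - (star ψ ⬝ᵥ (J l).mulVec ψ) • ψ = 0 := this
  rwa [sub_eq_zero] at h5

lemma gam_of_LD_zero {M n : ℕ} (J : Fin M → Matrix (Fin n) (Fin n) ℂ)
    (lam : Fin M → ℝ) (ψ : Fin n → ℂ) (hψ : star ψ ⬝ᵥ ψ = 1) (c : Fin M → ℂ)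
    (hc : ∀ l, (J l).mulVec ψ = c l • ψ)
    (h0 : LD J lam (vecMulVec ψ (star ψ)) = 0) :
    (Gam J lam).mulVec ψ = (∑ l, ((lam l * Complex.normSq (c l) : ℝ) : ℂ)) • ψ := by
  set w : Fin M → Fin n → ℂ := fun l => ((J l)ᴴ).mulVec ψ with hw
  have hAA : ∀ l, ((J l)ᴴ * J l).mulVec ψ = c l • w l := by
    intro l; rw [← Matrix.mulVec_mulVec, hc l, Matrix.mulVec_smul]
  have hsaψ : ∀ l, star ψ ⬝ᵥ ((J l)ᴴ * J l).mulVec ψ = star (c l) * c l := by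
    intro l
    rw [← Matrix.mulVec_mulVec, dot_conjTranspose, hc l, star_smul, smul_dotProduct,
      dotProduct_smul, hψ]
    simp [smul_eq_mul, mul_comm]
  have hterm : ∀ l, ((lam l : ℂ) • (J l * vecMulVec ψ (star ψ) * (J l)ᴴ
      - (1/2:ℂ) • ((J l)ᴴ * J l * vecMulVec ψ (star ψ))
      - (1/2:ℂ) • (vecMulVec ψ (star ψ) * ((J l)ᴴ * J l)))).mulVec ψ
      = ((lam l : ℂ) * (star (c l) * c l) / 2) • ψ - ((lam l : ℂ) * c l / 2) • w l := by
    intro l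
    have e1 : (J l * vecMulVec ψ (star ψ) * (J l)ᴴ).mulVec ψ
        = (star ((J l).mulVec ψ) ⬝ᵥ ψ) • (J l).mulVec ψ := by
      rw [← Matrix.mulVec_mulVec, ← Matrix.mulVec_mulVec, myVecMulVec_mulVec,
        dot_conjTranspose, Matrix.mulVec_smul]
    have e1' : (star ((J l).mulVec ψ) ⬝ᵥ ψ) • (J l).mulVec ψ
        = (star (c l) * c l) • ψ := by
      rw [hc l, star_smul, smul_dotProduct, hψ]
      match_scalars
      simp only [smul_eq_mul, mul_one]
      try ring
    have e2 : ((J l)ᴴ * J l * vecMulVec ψ (star ψ)).mulVec ψ = c l • w l := by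
      rw [← Matrix.mulVec_mulVec, myVecMulVec_mulVec, hψ, one_smul, hAA]
    have e3 : (vecMulVec ψ (star ψ) * ((J l)ᴴ * J l)).mulVec ψ
        = (star (c l) * c l) • ψ := by
      rw [← Matrix.mulVec_mulVec, myVecMulVec_mulVec, hsaψ]
    rw [Matrix.smul_mulVec, Matrix.sub_mulVec, Matrix.sub_mulVec,
      Matrix.smul_mulVec, Matrix.smul_mulVec, e1, e1', e2, e3]
    match_scalars <;> ring
  have hkey : (∑ l, ((lam l : ℂ) * (star (c l) * c l) / 2) • ψ)
      - ∑ l, ((lam l : ℂ) * c l / 2) • w l = 0 := by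
    rw [← Finset.sum_sub_distrib]
    have : ∑ l, (((lam l : ℂ) * (star (c l) * c l) / 2) • ψ
        - ((lam l : ℂ) * c l / 2) • w l) = (LD J lam (vecMulVec ψ (star ψ))).mulVec ψ := by
      rw [LD, mySum_mulVec]
      exact (Finset.sum_congr rfl fun l _ => (hterm l)).symm
    rw [this, h0, Matrix.zero_mulVec]
  have h6 : ∑ l, ((lam l : ℂ) * c l / 2) • w l
      = ∑ l, ((lam l : ℂ) * (star (c l) * c l) / 2) • ψ := by
    rw [sub_eq_zero] at hkey; exact hkey.symm
  have h7 : (Gam J lam).mulVec ψ = ∑ l, ((lam l : ℂ) * c l) • w l := by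
    rw [Gam, mySum_mulVec]
    refine Finset.sum_congr rfl (fun l _ => ?_)
    rw [Matrix.smul_mulVec, hAA l]
    match_scalars; ring
  have h8 : ∑ l, ((lam l : ℂ) * c l) • w l
      = (2:ℂ) • ∑ l, ((lam l : ℂ) * c l / 2) • w l := by
    rw [Finset.smul_sum]
    refine Finset.sum_congr rfl (fun l _ => ?_)
    match_scalars; ring
  rw [h7, h8, h6, Finset.smul_sum, Finset.sum_smul]
  refine Finset.sum_congr rfl (fun l _ => ?_)
  rw [smul_smul]
  congr 1
  rw [Complex.star_def, mul_comm (starRingEnd ℂ (c l)) (c l), Complex.mul_conj]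
  push_cast
  ring

lemma exists_unit {n : ℕ} (x : Fin n → ℂ) (hx : x ≠ 0) :
    ∃ r : ℝ, 0 < r ∧ star ((r:ℂ) • x) ⬝ᵥ ((r:ℂ) • x) = 1 := by
  set q : ℝ := ∑ i, Complex.normSq (x i) with hq
  have hq0 : 0 < q := by
    obtain ⟨i, hi⟩ := Function.ne_iff.1 hx
    have h1 : 0 < Complex.normSq (x i) := Complex.normSq_pos.2 hi
    exact lt_of_lt_of_le h1
      (Finset.single_le_sum (fun j _ => Complex.normSq_nonneg _) (Finset.mem_univ i))
  have hs : Real.sqrt q ≠ 0 := (Real.sqrt_pos.2 hq0).ne'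
  refine ⟨(Real.sqrt q)⁻¹, inv_pos.2 (Real.sqrt_pos.2 hq0), ?_⟩
  rw [star_smul, smul_dotProduct, dotProduct_smul, dot_self_eq, ← hq]
  simp only [Complex.star_def, Complex.conj_ofReal, smul_eq_mul]
  have h2 : (Real.sqrt q)⁻¹ * ((Real.sqrt q)⁻¹ * q) = 1 := by
    field_simp
    rw [Real.sq_sqrt hq0.le]
  exact_mod_cast h2

lemma mem_of_forall_dual {n : ℕ} (S : Submodule ℂ (Fin n → ℂ)) (x : Fin n → ℂ)
    (h : ∀ f : Module.Dual ℂ (Fin n → ℂ), (∀ s ∈ S, f s = 0) → f x = 0) : x ∈ S := by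
  rw [← Submodule.Quotient.mk_eq_zero S]
  rw [← Module.forall_dual_apply_eq_zero_iff ℂ]
  intro φ
  have := h (φ.comp S.mkQ) (fun s hs => by
    simp [Submodule.mkQ_apply, (Submodule.Quotient.mk_eq_zero S).2 hs])
  simpa using this

lemma expL_zero {M n : ℕ} (H : Matrix (Fin n) (Fin n) ℂ)
    (J : Fin M → Matrix (Fin n) (Fin n) ℂ) (lam : Fin M → ℝ) :
    expL H J lam 0 = 1 := by
  have h : ((0:ℂ) • Liou H J lam) = 0 := by ext ρ; simp
  rw [expL, Complex.ofReal_zero, h]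
  exact NormedSpace.exp_zero

lemma hasDerivAt_expL {M n : ℕ} (H : Matrix (Fin n) (Fin n) ℂ)
    (J : Fin M → Matrix (Fin n) (Fin n) ℂ) (lam : Fin M → ℝ) :
    HasDerivAt (fun u : ℂ => NormedSpace.exp (u • Liou H J lam)) (Liou H J lam)
      ((0:ℝ):ℂ) := by
  have h1 := hasDerivAt_exp_smul_const (𝕂 := ℂ) (Liou H J lam) ((0:ℝ):ℂ)
  have h : ((0:ℂ) • Liou H J lam) = 0 := by ext ρ; simp
  rw [Complex.ofReal_zero] at h1
  have e : NormedSpace.exp ((0:ℂ) • Liou H J lam) * Liou H J lam = Liou H J lam := by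
    rw [h, NormedSpace.exp_zero, one_mul]
  rw [Complex.ofReal_zero]
  exact h1.congr_deriv e

lemma liou_mulVec_mem {M n : ℕ} (H : Matrix (Fin n) (Fin n) ℂ)
    (J : Fin M → Matrix (Fin n) (Fin n) ℂ) (lam : Fin M → ℝ)
    (S : Submodule ℂ (Fin n → ℂ)) (ρ₀ : Matrix (Fin n) (Fin n) ℂ) (v : Fin n → ℂ)
    (hsupp : ∀ t : ℝ, 0 ≤ t → (expL H J lam t ρ₀).mulVec v ∈ S) :
    ((Liou H J lam) ρ₀).mulVec v ∈ S := by
  apply mem_of_forall_dual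
  intro f hf
  let Ψ : Matrix (Fin n) (Fin n) ℂ →ₗ[ℂ] ℂ :=
    { toFun := fun ρ => f (ρ.mulVec v)
      map_add' := fun a b => by simp [Matrix.add_mulVec]
      map_smul' := fun a b => by simp [Matrix.smul_mulVec] }
  let Ψc : Matrix (Fin n) (Fin n) ℂ →L[ℂ] ℂ := LinearMap.toContinuousLinearMap Ψ
  have h1 : HasDerivAt (fun u : ℂ => (NormedSpace.exp (u • Liou H J lam)) ρ₀)
      ((Liou H J lam) ρ₀) ((0:ℝ):ℂ) := by
    have h := ((ContinuousLinearMap.apply ℂ (Matrix (Fin n) (Fin n) ℂ)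
      ρ₀).hasFDerivAt).comp_hasDerivAt ((0:ℝ):ℂ) (hasDerivAt_expL H J lam)
    exact h
  have h2 : HasDerivAt (fun t : ℝ => Ψc ((expL H J lam t) ρ₀)) (Ψc ((Liou H J lam) ρ₀)) 0 := by
    have h := ((Ψc.hasFDerivAt).comp_hasDerivAt ((0:ℝ):ℂ) h1).comp_ofReal
    exact h
  have h3 : ∀ t ∈ Set.Ici (0:ℝ), Ψc ((expL H J lam t) ρ₀) = 0 := fun t ht =>
    hf _ (hsupp t ht)
  have h4 : HasDerivWithinAt (fun t : ℝ => Ψc ((expL H J lam t) ρ₀)) 0 (Set.Ici 0) 0 :=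
    (hasDerivWithinAt_const (0:ℝ) (Set.Ici (0:ℝ)) (0:ℂ)).congr h3 (h3 0 Set.self_mem_Ici)
  have h5 : Ψc ((Liou H J lam) ρ₀) = 0 :=
    (uniqueDiffOn_Ici (0:ℝ) 0 Set.self_mem_Ici).eq_deriv _ h2.hasDerivWithinAt h4
  exact h5

end Stmt8Aux

open Stmt8Aux

/-- Theorem (dynamically stable restricted DFS, necessity): if every pure state initialized
in the nonzero subspace `S` remains, for all `t ≥ 0`, a pure state supported in `S` that is
annihilated by `L_D`, then (i) `H` maps `S` into `S`, and there are common eigenvalues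
`c_l` and `g = Σ_l λ_l |c_l|²` such that (ii) `J_l ψ = c_l ψ` and (iii) `Γ ψ = g ψ` for
every `ψ ∈ S`. -/
theorem stmt8 {M n : ℕ} (H : Matrix (Fin n) (Fin n) ℂ) (hH : H.IsHermitian)
    (J : Fin M → Matrix (Fin n) (Fin n) ℂ) (lam : Fin M → ℝ) (hlam : ∀ l, 0 < lam l)
    (S : Submodule ℂ (Fin n → ℂ)) (hS : S ≠ ⊥)
    (hDF : ∀ ψ₀ ∈ S, star ψ₀ ⬝ᵥ ψ₀ = 1 → ∀ t : ℝ, 0 ≤ t →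
      LD J lam (expL H J lam t (vecMulVec ψ₀ (star ψ₀))) = 0
      ∧ ∃ φ ∈ S, star φ ⬝ᵥ φ = 1
          ∧ expL H J lam t (vecMulVec ψ₀ (star ψ₀)) = vecMulVec φ (star φ)) :
    (∀ ψ ∈ S, H.mulVec ψ ∈ S)
    ∧ ∃ c : Fin M → ℂ,
        (∀ ψ ∈ S, ∀ l, (J l).mulVec ψ = c l • ψ)
        ∧ ∀ ψ ∈ S, (Gam J lam).mulVec ψ
            = (∑ l, ((lam l * Complex.normSq (c l) : ℝ) : ℂ)) • ψ := by
  have hE0 : ∀ ρ : Matrix (Fin n) (Fin n) ℂ, expL H J lam 0 ρ = ρ := by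
    intro ρ; rw [expL_zero]; rfl
  have hLD0 : ∀ φ ∈ S, star φ ⬝ᵥ φ = 1 → LD J lam (vecMulVec φ (star φ)) = 0 := by
    intro φ hφ h1
    have h := (hDF φ hφ h1 0 le_rfl).1
    rwa [hE0] at h
  obtain ⟨x, hxS, hx0⟩ := (Submodule.ne_bot_iff S).1 hS
  obtain ⟨r0, hr0, hx1⟩ := exists_unit x hx0
  set ψ₀ : Fin n → ℂ := ((r0:ℝ):ℂ) • x with hψ₀def
  have hψ₀S : ψ₀ ∈ S := S.smul_mem _ hxS
  have hψ₀1 : star ψ₀ ⬝ᵥ ψ₀ = 1 := hx1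
  have hψ₀0 : ψ₀ ≠ 0 := by
    intro h; rw [h] at hψ₀1; simp at hψ₀1
  have heig : ∀ ψ ∈ S, ψ ≠ 0 → ∀ l, ∃ d : ℂ, (J l).mulVec ψ = d • ψ := by
    intro ψ hψ hne l
    obtain ⟨r, hr, h1⟩ := exists_unit ψ hne
    have hmem : ((r:ℝ):ℂ) • ψ ∈ S := S.smul_mem _ hψ
    have h2 := eigen_of_LD_zero J lam hlam _ h1 (hLD0 _ hmem h1) l
    set d := star (((r:ℝ):ℂ) • ψ) ⬝ᵥ (J l).mulVec (((r:ℝ):ℂ) • ψ) with hd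
    refine ⟨d, ?_⟩
    rw [Matrix.mulVec_smul] at h2
    have hrne : ((r:ℝ):ℂ) ≠ 0 := by exact_mod_cast hr.ne'
    have h3 : ((r:ℝ):ℂ) • ((J l).mulVec ψ) = ((r:ℝ):ℂ) • (d • ψ) := by
      rw [h2, smul_comm]
    exact smul_right_injective (Fin n → ℂ) hrne h3
  choose c0 hc0 using heig ψ₀ hψ₀S hψ₀0
  have heigc : ∀ ψ ∈ S, ∀ l, (J l).mulVec ψ = c0 l • ψ := by
    intro ψ hψ l
    by_cases h0 : ψ = 0
    · simp [h0]
    by_cases hspan : ∃ a : ℂ, ψ = a • ψ₀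
    · obtain ⟨a, rfl⟩ := hspan
      rw [Matrix.mulVec_smul, hc0 l, smul_comm]
    · push_neg at hspan
      obtain ⟨d, hd⟩ := heig ψ hψ h0 l
      have hsum0 : ψ + ψ₀ ≠ 0 := by
        intro h
        refine hspan (-1) ?_
        rw [neg_one_smul]
        exact eq_neg_of_add_eq_zero_left h
      obtain ⟨e, he⟩ := heig (ψ + ψ₀) (S.add_mem hψ hψ₀S) hsum0 l
      rw [Matrix.mulVec_add, hd, hc0 l, smul_add] at he
      have h3 : (d - e) • ψ = (e - c0 l) • ψ₀ := by
        rw [sub_smul, sub_smul, sub_eq_sub_iff_add_eq_add]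
        exact he.trans (add_comm _ _)
      have hde : d = e := by
        by_contra hne
        refine hspan ((d - e)⁻¹ * (e - c0 l)) ?_
        calc ψ = (d - e)⁻¹ • ((d - e) • ψ) := by
              rw [smul_smul, inv_mul_cancel₀ (sub_ne_zero.2 hne), one_smul]
          _ = (d - e)⁻¹ • ((e - c0 l) • ψ₀) := by rw [h3]
          _ = ((d - e)⁻¹ * (e - c0 l)) • ψ₀ := (smul_smul _ _ _)
      have hec : e = c0 l := by
        rw [hde, sub_self, zero_smul] at h3
        rcases smul_eq_zero.1 h3.symm with h | h
        · exact sub_eq_zero.1 h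
        · exact absurd h hψ₀0
      rw [hd, hde, hec]
  have hgam : ∀ ψ ∈ S, (Gam J lam).mulVec ψ
      = (∑ l, ((lam l * Complex.normSq (c0 l) : ℝ) : ℂ)) • ψ := by
    intro ψ hψ
    by_cases h0 : ψ = 0
    · simp [h0]
    obtain ⟨r, hr, h1⟩ := exists_unit ψ h0
    have hmem : ((r:ℝ):ℂ) • ψ ∈ S := S.smul_mem _ hψ
    have h2 := gam_of_LD_zero J lam _ h1 c0 (fun l => heigc _ hmem l) (hLD0 _ hmem h1)
    rw [Matrix.mulVec_smul] at h2
    have hrne : ((r:ℝ):ℂ) ≠ 0 := by exact_mod_cast hr.ne'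
    have h3 : ((r:ℝ):ℂ) • ((Gam J lam).mulVec ψ)
        = ((r:ℝ):ℂ) • ((∑ l, ((lam l * Complex.normSq (c0 l) : ℝ) : ℂ)) • ψ) := by
      rw [h2, smul_comm]
    exact smul_right_injective (Fin n → ℂ) hrne h3
  have hHmem : ∀ ψ ∈ S, H.mulVec ψ ∈ S := by
    intro ψ hψ
    by_cases h0 : ψ = 0
    · rw [h0, Matrix.mulVec_zero]; exact S.zero_mem
    obtain ⟨r, hr, h1⟩ := exists_unit ψ h0
    set ψ' : Fin n → ℂ := ((r:ℝ):ℂ) • ψ with hψ'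
    have hmem : ψ' ∈ S := S.smul_mem _ hψ
    set ρ₀ := vecMulVec ψ' (star ψ') with hρ₀
    have hsupp : ∀ t : ℝ, 0 ≤ t → (expL H J lam t ρ₀).mulVec ψ' ∈ S := by
      intro t ht
      obtain ⟨φ, hφS, hφ1, hφeq⟩ := (hDF ψ' hmem h1 t ht).2
      rw [hφeq, myVecMulVec_mulVec]
      exact S.smul_mem _ hφS
    have hmem2 := liou_mulVec_mem H J lam S ρ₀ ψ' hsupp
    have hLD : LD J lam ρ₀ = 0 := hLD0 _ hmem h1
    rw [Liou_apply, hLD, add_zero] at hmem2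
    rw [Matrix.smul_mulVec, Matrix.sub_mulVec] at hmem2
    have e1 : (H * ρ₀).mulVec ψ' = H.mulVec ψ' := by
      rw [hρ₀, ← Matrix.mulVec_mulVec, myVecMulVec_mulVec, h1, one_smul]
    have e2 : (ρ₀ * H).mulVec ψ' = (star ψ' ⬝ᵥ H.mulVec ψ') • ψ' := by
      rw [hρ₀, ← Matrix.mulVec_mulVec, myVecMulVec_mulVec]
    rw [e1, e2] at hmem2
    have h4 := S.smul_mem (-Complex.I)⁻¹ hmem2
    rw [smul_smul, inv_mul_cancel₀ (by simp : (-Complex.I) ≠ 0), one_smul] at h4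
    have h5 : H.mulVec ψ' ∈ S := by
      have h6 := S.add_mem h4 (S.smul_mem (star ψ' ⬝ᵥ H.mulVec ψ') hmem)
      rwa [sub_add_cancel] at h6
    rw [hψ', Matrix.mulVec_smul] at h5
    have hrne : ((r:ℝ):ℂ) ≠ 0 := by exact_mod_cast hr.ne'
    have h7 := S.smul_mem (((r:ℝ):ℂ))⁻¹ h5
    rwa [smul_smul, inv_mul_cancel₀ hrne, one_smul] at h7
  exact ⟨hHmem, c0, heigc, hgam⟩
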